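/- Let f be a strongly hyperbolic function and let x₁ < 0 < y₂ < y₁ be real numbers with y₁/y₂ > 1. Then there exists b₀ > −x₁ such that f(x₁+b₀)/f(b₀) = y₁/y₂; consequently the system y₁ = a·f(x₁+b), y₂ = a·f(b) has a solution with a > 0. -/

import Mathlib

open Filter Set Real

/-- A strongly hyperbolic function `f : (0,∞) → (0,∞)`. -/
def StronglyHyperbolic (f : ℝ → ℝ) : Prop :=
  (∀ x ∈ Set.Ioi (0:ℝ), 0 < f x) ∧
  Filter.Tendsto f (nhdsWithin 0 (Set.Ioi 0)) Filter.atTop ∧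
  Filter.Tendsto f Filter.atTop (nhds 0) ∧
  StrictConvexOn ℝ (Set.Ioi 0) f ∧
  (∀ b : ℝ, Filter.Tendsto (fun x => f (x + b) / f x) Filter.atTop (nhds 1)) ∧
  (∀ x ∈ Set.Ioi (0:ℝ), DifferentiableAt ℝ f x) ∧
  StrictConvexOn ℝ (Set.Ioi 0) (fun x => Real.log |deriv f x|)

theorem stmt15 (f : ℝ → ℝ) (hf : StronglyHyperbolic f) (x₁ y₁ y₂ : ℝ)
    (hx : x₁ < 0) (hy2 : 0 < y₂) (hy : y₂ < y₁) :
    ∃ b₀ > -x₁, f (x₁ + b₀) / f b₀ = y₁ / y₂ ∧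
      ∃ a > (0:ℝ), y₁ = a * f (x₁ + b₀) ∧ y₂ = a * f b₀ := by
  obtain ⟨hpos, h0, hinf, hconv, hratio, hdiff, hlog⟩ := hf
  set c := -x₁ with hc
  have hc0 : (0:ℝ) < c := by simp [hc]; linarith
  have hr1 : 1 < y₁ / y₂ := (one_lt_div hy2).2 hy
  have hcont : ∀ x ∈ Ioi (0:ℝ), ContinuousAt f x := fun x hx => (hdiff x hx).continuousAt
  set g : ℝ → ℝ := fun b => f (x₁ + b) / f b with hgdef
  -- continuity of g on Ioi c
  have hgcont : ∀ b ∈ Ioi c, ContinuousAt g b := by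
    intro b hb
    have hb' : c < b := hb
    have hb0 : 0 < b := hc0.trans hb'
    have h1 : 0 < x₁ + b := by simp [hc] at hb'; linarith
    have hA : ContinuousAt (fun b => f (x₁ + b)) b :=
      (hcont _ (mem_Ioi.2 h1)).comp ((continuous_add_left x₁).continuousAt)
    exact hA.div (hcont b (mem_Ioi.2 hb0)) (ne_of_gt (hpos b (mem_Ioi.2 hb0)))
  -- limit atTop near c from the right
  have hmap : Tendsto (fun b => x₁ + b) (nhdsWithin c (Ioi c)) (nhdsWithin 0 (Ioi 0)) := by
    apply tendsto_nhdsWithin_of_tendsto_nhds_of_eventually_within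
    · have h := ((continuous_add_left x₁).tendsto c).mono_left
        (nhdsWithin_le_nhds (s := Ioi c))
      simpa [hc] using h
    · filter_upwards [self_mem_nhdsWithin] with b hb
      have : c < b := hb
      simp [hc] at this ⊢
      linarith
  have hnum : Tendsto (fun b => f (x₁ + b)) (nhdsWithin c (Ioi c)) atTop := h0.comp hmap
  have hfc : 0 < f c := hpos c (mem_Ioi.2 hc0)
  have hden : Tendsto (fun b => (f b)⁻¹) (nhdsWithin c (Ioi c)) (nhds (f c)⁻¹) :=
    (((hcont c (mem_Ioi.2 hc0)).tendsto).mono_left nhdsWithin_le_nhds).inv₀ (ne_of_gt hfc)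
  have hgtop : Tendsto g (nhdsWithin c (Ioi c)) atTop := by
    have := hnum.atTop_mul_pos (inv_pos.2 hfc) hden
    simpa [hgdef, div_eq_mul_inv] using this
  -- pick b_low
  have hev1 : ∀ᶠ b in nhdsWithin c (Ioi c), y₁ / y₂ < g b := hgtop.eventually_gt_atTop _
  obtain ⟨blow, hblow1, hblow2⟩ := (hev1.and self_mem_nhdsWithin).exists
  have hblowc : c < blow := hblow2
  -- limit 1 at infinity
  have hg1 : Tendsto g atTop (nhds 1) := by
    have := hratio x₁
    simpa [hgdef, add_comm] using this
  have hev2 : ∀ᶠ b in atTop, g b < y₁ / y₂ := hg1.eventually_lt_const hr1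
  obtain ⟨bhigh, hbhigh1, hbhigh2⟩ := ((eventually_gt_atTop blow).and hev2).exists
  -- IVT
  have hcontOn : ContinuousOn g (Icc blow bhigh) := fun x hx =>
    (hgcont x (mem_Ioi.2 (hblowc.trans_le hx.1))).continuousWithinAt
  have hsub := intermediate_value_Icc' (le_of_lt hbhigh1) hcontOn
  have hmem : y₁ / y₂ ∈ Icc (g bhigh) (g blow) := ⟨le_of_lt hbhigh2, le_of_lt hblow1⟩
  obtain ⟨b₀, hb₀mem, hgb₀⟩ := hsub hmem
  have hb₀c : c < b₀ := hblowc.trans_le hb₀mem.1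
  have hb₀0 : 0 < b₀ := hc0.trans hb₀c
  have hfb₀ : 0 < f b₀ := hpos b₀ (mem_Ioi.2 hb₀0)
  refine ⟨b₀, hb₀c, hgb₀, y₂ / f b₀, div_pos hy2 hfb₀, ?_, ?_⟩
  · have h := hgb₀
    rw [hgdef, div_eq_div_iff (ne_of_gt hfb₀) (ne_of_gt hy2)] at h
    field_simp
    linarith [h]
  · field_simp
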